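/- Take σ = 1. Let F ⊆ ℝⁿ be a linear subspace of dimension d < n with orthogonal projection Π_F, let 0 < ξ < 1 and 0 < δ < 1 − ξ, and set ε = (n−d)^{1/4} · n^{−1/2} · (2·log(1 + 4δ²))^{1/4}. Let A = {f ∈ ℝⁿ : ‖f − Π_F f‖ > ε}. Then for every Borel measurable test φ : ℝⁿ → {0,1} satisfying sup_{f∈F} P_f(φ(Y) = 1) ≤ ξ, one has sup_{f∈A} P_f(φ(Y) = 0) ≥ 1 − ξ − δ. -/

import Mathlib

open MeasureTheory ProbabilityTheory Real

noncomputable section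

/-- Product Gaussian measure `N(f, σ² Iₙ)` on `ℝⁿ`. -/
def gaussP (n : ℕ) (f : Fin n → ℝ) (σ : ℝ) : Measure (Fin n → ℝ) :=
  Measure.pi fun i => gaussianReal (f i) (Real.toNNReal (σ ^ 2))

/-- Standard normal CDF `Φ`. -/
def stdCDF (x : ℝ) : ℝ := ((gaussianReal 0 1) (Set.Iic x)).toReal

/-- Standard normal density `φ`. -/
def stdPDF (x : ℝ) : ℝ := Real.exp (-(x ^ 2) / 2) / Real.sqrt (2 * Real.pi)

/-- `τ(ε) = Φ(ε/2) - Φ(-ε/2)`. -/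
def tau (ε : ℝ) : ℝ := stdCDF (ε / 2) - stdCDF (-(ε / 2))

/-- Inverse of `τ`. -/
def tauInv (p : ℝ) : ℝ := Function.invFun tau p

/-- Standard normal quantile function `Φ⁻¹`. -/
def PhiInv (p : ℝ) : ℝ := Function.invFun stdCDF p

/-- Normalized Euclidean norm `‖v‖ = √((1/n) ∑ vᵢ²)`. -/
def norm2 (n : ℕ) (v : Fin n → ℝ) : ℝ := Real.sqrt ((∑ i, (v i) ^ 2) / n)

/-- Sup norm `‖v‖_∞ = maxᵢ |vᵢ|`. -/
def normInf (n : ℕ) (v : Fin n → ℝ) : ℝ := ⨆ i, |v i|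

/-- Normalized inner product. -/
def inner2 (n : ℕ) (u v : Fin n → ℝ) : ℝ := (∑ i, u i * v i) / n

/-- Total variation distance between two measures on `ℝⁿ`. -/
def dTV (n : ℕ) (P Q : Measure (Fin n → ℝ)) : ℝ :=
  ⨆ A : {A : Set (Fin n → ℝ) // MeasurableSet A}, |(P A).toReal - (Q A).toReal|

/-- Width of the band `(L, U)` at data `y`. -/
def width (n : ℕ) (L U : (Fin n → ℝ) → Fin n → ℝ) (y : Fin n → ℝ) : ℝ :=
  ⨆ i, (U y i - L y i)

/-- The band `(L,U)` covers `g` at data `y`. -/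
def covers (n : ℕ) (L U : (Fin n → ℝ) → Fin n → ℝ) (g y : Fin n → ℝ) : Prop :=
  ∀ i, L y i ≤ g i ∧ g i ≤ U y i

/-- `P` is the orthogonal projection onto the subspace `F` of `ℝⁿ`. -/
def IsOrthProjOn (n : ℕ) (F : Submodule ℝ (Fin n → ℝ))
    (P : (Fin n → ℝ) →ₗ[ℝ] (Fin n → ℝ)) : Prop :=
  (∀ f, P f ∈ F) ∧ (∀ f, ∀ g ∈ F, inner2 n (f - P f) g = 0)

/-- `Ω_F = max_i ‖Π_F eᵢ‖ / ‖eᵢ‖`. -/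
def OmegaF (n : ℕ) (P : (Fin n → ℝ) →ₗ[ℝ] (Fin n → ℝ)) : ℝ :=
  ⨆ i : Fin n, norm2 n (P (Pi.single i 1)) / norm2 n (Pi.single i 1)

/-- The `p`-quantile of the chi-squared distribution with `m` degrees of freedom. -/
def chiSqQuantile (m : ℕ) (p : ℝ) : ℝ :=
  sInf {t : ℝ | ENNReal.ofReal p ≤
    (Measure.pi fun _ : Fin m => gaussianReal 0 1) {z | ∑ k, (z k) ^ 2 ≤ t}}


namespace TLB

lemma lintegral_pi_prod : ∀ {n : ℕ} (μ : Fin n → Measure ℝ), (∀ i, SigmaFinite (μ i)) →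
    ∀ (f : Fin n → ℝ → ENNReal), (∀ i, Measurable (f i)) →
    ∫⁻ y, ∏ i, f i (y i) ∂(Measure.pi μ) = ∏ i, ∫⁻ x, f i x ∂(μ i) := by
  intro n
  induction n with
  | zero =>
      intro μ _ f _
      simp [lintegral_const, Measure.pi_univ]
  | succ n ih =>
      intro μ hμ f hf
      haveI := fun i => hμ i
      have hF : Measurable fun y : Fin (n+1) → ℝ => ∏ i, f i (y i) :=
        Finset.measurable_prod _ fun i _ => (hf i).comp (measurable_pi_apply i)
      have hmp := (measurePreserving_piFinSuccAbove μ 0).symm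
      rw [← hmp.lintegral_comp hF]
      have heq : ∀ z : ℝ × (Fin n → ℝ),
          (∏ i, f i (((MeasurableEquiv.piFinSuccAbove (fun _ => ℝ) 0).symm z) i))
            = f 0 z.1 * ∏ j : Fin n, f j.succ (z.2 j) := by
        intro z
        simp only [MeasurableEquiv.piFinSuccAbove_symm_apply, Fin.insertNthEquiv,
          Equiv.coe_fn_mk, Fin.insertNth_zero]
        rw [Fin.prod_univ_succ]
        simp [Fin.cons_succ, Fin.cons_zero]
      simp_rw [heq]
      rw [lintegral_prod_mul (f := fun x => f 0 x)
        (g := fun y : Fin n → ℝ => ∏ j : Fin n, f j.succ (y j)) ((hf 0).aemeasurable)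
        ((Finset.measurable_prod _ fun j _ =>
          (hf j.succ).comp (measurable_pi_apply j)).aemeasurable)]
      rw [ih _ (fun j => hμ _) _ (fun j => hf j.succ), Fin.prod_univ_succ]
      simp [Fin.zero_succAbove]


/-- likelihood-ratio factor -/
def expF (a x : ℝ) : ℝ := Real.exp (a * x - a ^ 2 / 2)

lemma expF_pos (a x : ℝ) : 0 < expF a x := Real.exp_pos _

lemma pdf_factor (a x : ℝ) :
    gaussianPDFReal a 1 x = gaussianPDFReal 0 1 x * expF a x := by
  simp only [gaussianPDFReal, expF, NNReal.coe_one]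
  have : Real.exp (-(x - a) ^ 2 / (2*1)) =
      Real.exp (-(x - 0) ^ 2 / (2*1)) * Real.exp (a * x - a ^ 2 / 2) := by
    rw [← Real.exp_add]
    congr 1
    ring
  rw [this]
  ring

lemma expF_mul (a b x : ℝ) :
    expF a x * expF b x = Real.exp (a * b) * expF (a + b) x := by
  simp only [expF, ← Real.exp_add]
  congr 1
  ring

variable {n : ℕ}

/-- real product density -/
def GR (a : Fin n → ℝ) (y : Fin n → ℝ) : ℝ := ∏ i, gaussianPDFReal (a i) 1 (y i)

def LR (a : Fin n → ℝ) (y : Fin n → ℝ) : ℝ := ∏ i, expF (a i) (y i)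

lemma GR_nonneg (a y : Fin n → ℝ) : 0 ≤ GR a y :=
  Finset.prod_nonneg fun i _ => gaussianPDFReal_nonneg _ _ _

lemma LR_pos (a y : Fin n → ℝ) : 0 < LR a y :=
  Finset.prod_pos fun i _ => expF_pos _ _

lemma measurable_GR (a : Fin n → ℝ) : Measurable (GR a) :=
  Finset.measurable_prod _ fun i _ =>
    (measurable_gaussianPDFReal _ _).comp (measurable_pi_apply i)

lemma measurable_LR (a : Fin n → ℝ) : Measurable (LR a) := by
  apply Finset.measurable_prod
  intro i _
  apply Measurable.comp Real.measurable_exp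
  exact (measurable_const.mul (measurable_pi_apply i)).sub measurable_const

lemma GR_eq (a y : Fin n → ℝ) : GR a y = GR 0 y * LR a y := by
  rw [GR, GR, LR, ← Finset.prod_mul_distrib]
  apply Finset.prod_congr rfl
  intro i _
  simpa using pdf_factor (a i) (y i)

lemma gaussP_eq_withDensity (a : Fin n → ℝ) :
    gaussP n a 1 = (volume : Measure (Fin n → ℝ)).withDensity
      (fun y => ENNReal.ofReal (GR a y)) := by
  have h1 : Real.toNNReal ((1:ℝ) ^ 2) = 1 := by norm_num
  rw [gaussP]
  simp_rw [h1]
  have hmeas : ∀ i, Measurable (fun x : ℝ => gaussianPDF (a i) 1 x) :=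
    fun i => measurable_gaussianPDF _ _
  rw [show (volume : Measure (Fin n → ℝ)) = Measure.pi (fun _ => (volume : Measure ℝ)) from
    volume_pi]
  apply Measure.pi_eq
  intro s hs
  have hd : Measurable fun y : Fin n → ℝ => ENNReal.ofReal (GR a y) :=
    (measurable_GR a).ennreal_ofReal
  rw [withDensity_apply _ (MeasurableSet.univ_pi hs)]
  have : ∀ y : Fin n → ℝ, Set.indicator (Set.pi Set.univ s)
      (fun y => ENNReal.ofReal (GR a y)) y
      = ∏ i, Set.indicator (s i) (fun x => gaussianPDF (a i) 1 x) (y i) := by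
    intro y
    by_cases hy : y ∈ Set.pi Set.univ s
    · rw [Set.indicator_of_mem hy]
      rw [GR, ENNReal.ofReal_prod_of_nonneg (fun i _ => gaussianPDFReal_nonneg _ _ _)]
      apply Finset.prod_congr rfl
      intro i _
      rw [Set.indicator_of_mem (Set.mem_univ_pi.mp hy i)]
      rfl
    · rw [Set.indicator_of_notMem hy]
      rw [Set.mem_univ_pi] at hy
      push_neg at hy
      obtain ⟨i, hi⟩ := hy
      symm
      apply Finset.prod_eq_zero (Finset.mem_univ i)
      rw [Set.indicator_of_notMem hi]
  rw [← lintegral_indicator (MeasurableSet.univ_pi hs)]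
  simp_rw [this]
  rw [lintegral_pi_prod _ (fun _ => inferInstance) _
    (fun i => (hmeas i).indicator (hs i))]
  apply Finset.prod_congr rfl
  intro i _
  rw [lintegral_indicator (hs i), gaussianReal_of_var_ne_zero _ one_ne_zero,
    withDensity_apply _ (hs i)]


lemma gaussP_prob (a : Fin n → ℝ) : IsProbabilityMeasure (gaussP n a 1) := by
  unfold gaussP
  infer_instance

lemma gaussP_eq_P0_withDensity (a : Fin n → ℝ) :
    gaussP n a 1 = (gaussP n 0 1).withDensity
      (fun y => ENNReal.ofReal (LR a y)) := by
  rw [gaussP_eq_withDensity a, gaussP_eq_withDensity 0,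
    ← withDensity_mul _ (measurable_GR 0).ennreal_ofReal (measurable_LR a).ennreal_ofReal]
  congr 1
  funext y
  rw [Pi.mul_apply, ← ENNReal.ofReal_mul (GR_nonneg 0 y), ← GR_eq]

lemma integral_P0 (f : (Fin n → ℝ) → ℝ) :
    ∫ y, f y ∂(gaussP n 0 1) = ∫ y, GR 0 y * f y := by
  rw [gaussP_eq_withDensity]
  have h : (fun y : Fin n → ℝ => ENNReal.ofReal (GR 0 y))
      = fun y => ((Real.toNNReal (GR 0 y) : NNReal) : ENNReal) := rfl
  rw [h, integral_withDensity_eq_integral_smul (measurable_GR 0).real_toNNReal f]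
  congr 1
  funext y
  rw [NNReal.smul_def, Real.coe_toNNReal _ (GR_nonneg _ _)]
  rfl

lemma integrable_P0_iff (f : (Fin n → ℝ) → ℝ) :
    Integrable f (gaussP n 0 1) ↔ Integrable (fun y => GR 0 y * f y) := by
  rw [gaussP_eq_withDensity]
  have h : (fun y : Fin n → ℝ => ENNReal.ofReal (GR 0 y))
      = fun y => ((Real.toNNReal (GR 0 y) : NNReal) : ENNReal) := rfl
  rw [h, integrable_withDensity_iff_integrable_smul (measurable_GR 0).real_toNNReal]
  constructor <;> intro hi <;> [skip; skip] <;>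
    · apply hi.congr
      filter_upwards with y
      rw [NNReal.smul_def, Real.coe_toNNReal _ (GR_nonneg _ _)]
      rfl

lemma GR_LR_mul (a b : Fin n → ℝ) (y : Fin n → ℝ) :
    GR 0 y * (LR a y * LR b y)
      = ∏ i, (Real.exp (a i * b i) * gaussianPDFReal (a i + b i) 1 (y i)) := by
  rw [GR, LR, LR, ← Finset.prod_mul_distrib, ← Finset.prod_mul_distrib]
  apply Finset.prod_congr rfl
  intro i _
  rw [expF_mul]
  have := pdf_factor (a i + b i) (y i)
  simp only [Pi.zero_apply]
  rw [show gaussianPDFReal 0 1 (y i) * (Real.exp (a i * b i) * expF (a i + b i) (y i))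
    = Real.exp (a i * b i) * (gaussianPDFReal 0 1 (y i) * expF (a i + b i) (y i)) from by ring,
    ← this]

lemma integrable_LR_mul (a b : Fin n → ℝ) :
    Integrable (fun y => LR a y * LR b y) (gaussP n 0 1) := by
  rw [integrable_P0_iff]
  have : (fun y : Fin n → ℝ => GR 0 y * (LR a y * LR b y))
      = fun y => ∏ i, (Real.exp (a i * b i) * gaussianPDFReal (a i + b i) 1 (y i)) := by
    funext y
    exact GR_LR_mul a b y
  rw [this]
  exact Integrable.fintype_prod fun i =>
    (integrable_gaussianPDFReal _ _).const_mul _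

lemma integral_LR_mul (a b : Fin n → ℝ) :
    ∫ y, LR a y * LR b y ∂(gaussP n 0 1) = Real.exp (∑ i, a i * b i) := by
  rw [integral_P0]
  simp_rw [GR_LR_mul a b]
  rw [MeasureTheory.integral_fintype_prod_volume_eq_prod
    (f := fun i x => Real.exp (a i * b i) * gaussianPDFReal (a i + b i) 1 x)]
  rw [Real.exp_sum]
  apply Finset.prod_congr rfl
  intro i _
  rw [MeasureTheory.integral_const_mul, integral_gaussianPDFReal_eq_one _ one_ne_zero, mul_one]

lemma LR_zero : LR (0 : Fin n → ℝ) = fun _ => 1 := by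
  funext y
  rw [LR]
  apply Finset.prod_eq_one
  intro i _
  simp [expF]

lemma integrable_LR (a : Fin n → ℝ) : Integrable (LR a) (gaussP n 0 1) := by
  have := integrable_LR_mul a (0 : Fin n → ℝ)
  rw [LR_zero] at this
  simpa using this

lemma integral_LR (a : Fin n → ℝ) : ∫ y, LR a y ∂(gaussP n 0 1) = 1 := by
  have := integral_LR_mul a (0 : Fin n → ℝ)
  rw [LR_zero] at this
  simpa using this

lemma gaussP_apply_toReal (a : Fin n → ℝ) (S : Set (Fin n → ℝ)) (hS : MeasurableSet S) :
    (gaussP n a 1 S).toReal = ∫ y in S, LR a y ∂(gaussP n 0 1) := by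
  rw [gaussP_eq_P0_withDensity, withDensity_apply _ hS,
    integral_eq_lintegral_of_nonneg_ae
      (Filter.Eventually.of_forall fun y => (LR_pos a y).le)
      (measurable_LR a).aestronglyMeasurable]


lemma sq_integral_abs_le {α : Type*} [MeasurableSpace α] (μ : Measure α)
    [IsProbabilityMeasure μ] {f : α → ℝ} (hf : Integrable f μ)
    (hf2 : Integrable (fun x => f x ^ 2) μ) :
    (∫ x, |f x| ∂μ) ^ 2 ≤ ∫ x, f x ^ 2 ∂μ := by
  set c := ∫ x, |f x| ∂μ with hc
  have habs : Integrable (fun x => |f x|) μ := hf.abs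
  have h0 : 0 ≤ ∫ x, (|f x| - c) ^ 2 ∂μ := integral_nonneg fun x => sq_nonneg _
  have hexp : (fun x => (|f x| - c) ^ 2)
      = fun x => f x ^ 2 - (2 * c) * |f x| + c ^ 2 := by
    funext x
    have : |f x| ^ 2 = f x ^ 2 := sq_abs _
    nlinarith [this]
  rw [hexp] at h0
  have hsub : Integrable (fun x => f x ^ 2 - 2 * c * |f x|) μ := by
    have := hf2.sub (habs.const_mul (2 * c))
    exact this
  have hcm : Integrable (fun x => 2 * c * |f x|) μ := habs.const_mul (2 * c)
  rw [integral_add hsub (integrable_const _), integral_sub hf2 hcm,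
    MeasureTheory.integral_const_mul, ← hc,
    integral_const, probReal_univ, one_smul] at h0
  nlinarith [h0]

lemma abs_setIntegral_le_half {α : Type*} [MeasurableSpace α] (μ : Measure α)
    {f : α → ℝ} (hf : Integrable f μ) (hf0 : ∫ x, f x ∂μ = 0)
    {S : Set α} (hS : MeasurableSet S) :
    |∫ x in S, f x ∂μ| ≤ (∫ x, |f x| ∂μ) / 2 := by
  have hsum : (∫ x in S, f x ∂μ) + (∫ x in Sᶜ, f x ∂μ) = 0 := by
    rw [integral_add_compl hS hf, hf0]
  have h1 : |∫ x in S, f x ∂μ| ≤ ∫ x in S, |f x| ∂μ := by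
    simpa [Real.norm_eq_abs] using norm_integral_le_integral_norm (μ := μ.restrict S) f
  have h2 : |∫ x in Sᶜ, f x ∂μ| ≤ ∫ x in Sᶜ, |f x| ∂μ := by
    simpa [Real.norm_eq_abs] using norm_integral_le_integral_norm (μ := μ.restrict Sᶜ) f
  have h3 : (∫ x in S, |f x| ∂μ) + (∫ x in Sᶜ, |f x| ∂μ) = ∫ x, |f x| ∂μ :=
    integral_add_compl hS hf.abs
  have h4 : |∫ x in Sᶜ, f x ∂μ| = |∫ x in S, f x ∂μ| := by
    rw [show (∫ x in Sᶜ, f x ∂μ) = -(∫ x in S, f x ∂μ) from by linarith, abs_neg]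
  linarith [h1, h2]


lemma inner_comb {m : ℕ} (w : Fin m → Fin n → ℝ)
    (hw : ∀ j k, (∑ i, w j i * w k i) = if j = k then (1:ℝ) else 0)
    (c c' : Fin m → ℝ) :
    ∑ i, (∑ j, c j * w j i) * (∑ k, c' k * w k i) = ∑ j, c j * c' j := by
  have h1 : ∀ i, (∑ j, c j * w j i) * (∑ k, c' k * w k i)
      = ∑ j, ∑ k, (c j * c' k) * (w j i * w k i) := by
    intro i
    rw [Finset.sum_mul_sum]
    exact Finset.sum_congr rfl fun j _ => Finset.sum_congr rfl fun k _ => by ring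
  simp_rw [h1]
  rw [Finset.sum_comm]
  apply Finset.sum_congr rfl
  intro j _
  rw [Finset.sum_comm]
  have h2 : ∀ k, ∑ i, (c j * c' k) * (w j i * w k i)
      = (c j * c' k) * (if j = k then (1:ℝ) else 0) := by
    intro k
    rw [← Finset.mul_sum, hw j k]
  simp_rw [h2]
  simp [Finset.sum_ite_eq]

lemma sum_sum_prod_eq {m : ℕ} (h : Bool → Bool → ℝ) :
    ∑ η : Fin m → Bool, ∑ η' : Fin m → Bool, ∏ j, h (η j) (η' j)
      = (∑ p : Bool, ∑ q : Bool, h p q) ^ m := by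
  have e1 : ∑ z : (Fin m → Bool) × (Fin m → Bool), (∏ j, h (z.1 j) (z.2 j))
      = ∑ η : Fin m → Bool, ∑ η' : Fin m → Bool, ∏ j, h (η j) (η' j) :=
    Fintype.sum_prod_type _
  rw [← e1]
  have e2 : ∑ ζ : Fin m → Bool × Bool, ∏ j, h (ζ j).1 (ζ j).2
      = ∑ z : (Fin m → Bool) × (Fin m → Bool), ∏ j, h (z.1 j) (z.2 j) := by
    apply Fintype.sum_equiv (Equiv.arrowProdEquivProdArrow (Fin m) (fun _ => Bool) (fun _ => Bool))
    intro ζ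
    rfl
  rw [← e2]
  have e3 : ∑ ζ : Fin m → Bool × Bool, ∏ j, h (ζ j).1 (ζ j).2
      = ∏ _j : Fin m, ∑ p : Bool × Bool, h p.1 p.2 :=
    (Fintype.prod_sum (fun (_ : Fin m) (p : Bool × Bool) => h p.1 p.2)).symm
  rw [e3, Finset.prod_const, Finset.card_univ, Fintype.card_fin]
  congr 1
  exact Fintype.sum_prod_type _

lemma mixture (m : ℕ) (w : Fin m → Fin n → ℝ)
    (hw : ∀ j k, (∑ i, w j i * w k i) = if j = k then (1:ℝ) else 0)
    (ρ : ℝ) (S : Set (Fin n → ℝ)) (hS : MeasurableSet S)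
    (δ' : ℝ) (hδ' : 0 < δ')
    (hρ : Real.cosh (ρ ^ 2) ^ m ≤ 1 + 4 * δ' ^ 2) :
    ∃ η : Fin m → Bool,
      (gaussP n (fun i => ∑ j, (ρ * (if η j then (1:ℝ) else -1)) * w j i) 1 S).toReal
        ≤ (gaussP n (0 : Fin n → ℝ) 1 S).toReal + δ' := by
  classical
  haveI : IsProbabilityMeasure (gaussP n (0 : Fin n → ℝ) 1) := gaussP_prob 0
  set P0 := gaussP n (0 : Fin n → ℝ) 1 with hP0
  set sgn : Bool → ℝ := fun b => if b then (1:ℝ) else -1 with hsgn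
  set θ : (Fin m → Bool) → Fin n → ℝ :=
    fun η i => ∑ j, (ρ * sgn (η j)) * w j i with hθ
  set N : ℝ := (2 : ℝ) ^ m with hN
  have hNpos : 0 < N := by positivity
  -- inner products
  have hip : ∀ η η' : Fin m → Bool,
      ∑ i, θ η i * θ η' i = ∑ j, (ρ * sgn (η j)) * (ρ * sgn (η' j)) := by
    intro η η'
    exact inner_comb w hw _ _
  set T : (Fin n → ℝ) → ℝ := fun y => ∑ η : Fin m → Bool, LR (θ η) y with hT
  set g : (Fin n → ℝ) → ℝ := fun y => T y - N with hg
  have hcard : (Fintype.card (Fin m → Bool) : ℝ) = N := by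
    rw [Fintype.card_fun, Fintype.card_bool, Fintype.card_fin, hN]
    norm_num
  have hTint : Integrable T P0 :=
    integrable_finset_sum _ fun η _ => integrable_LR (θ η)
  have hgint : Integrable g P0 := hTint.sub (integrable_const N)
  have hintT : ∫ y, T y ∂P0 = N := by
    rw [hT, integral_finset_sum _ fun η _ => integrable_LR (θ η)]
    simp_rw [integral_LR]
    rw [Finset.sum_const, Finset.card_univ, nsmul_eq_mul, mul_one, hcard]
  have hg0 : ∫ y, g y ∂P0 = 0 := by
    rw [hg]
    rw [integral_sub hTint (integrable_const N), hintT, integral_const, probReal_univ,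
      one_smul, sub_self]
  have hTTeq : (fun y => T y * T y)
      = fun y => ∑ η : Fin m → Bool, ∑ η' : Fin m → Bool, LR (θ η) y * LR (θ η') y := by
    funext y
    rw [hT, Finset.sum_mul_sum]
  have hTTint : Integrable (fun y => T y * T y) P0 := by
    rw [hTTeq]
    exact integrable_finset_sum _ fun η _ =>
      integrable_finset_sum _ fun η' _ => integrable_LR_mul (θ η) (θ η')
  have hintTT : ∫ y, T y * T y ∂P0
      = ∑ η : Fin m → Bool, ∑ η' : Fin m → Bool, Real.exp (∑ i, θ η i * θ η' i) := by
    rw [hTTeq, integral_finset_sum _ fun η _ =>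
      integrable_finset_sum _ fun η' _ => integrable_LR_mul (θ η) (θ η')]
    apply Finset.sum_congr rfl
    intro η _
    rw [integral_finset_sum _ fun η' _ => integrable_LR_mul (θ η) (θ η')]
    exact Finset.sum_congr rfl fun η' _ => integral_LR_mul (θ η) (θ η')
  -- integral of g^2
  have hg2eq : (fun y => g y ^ 2)
      = fun y => T y * T y - (2 * N) * T y + N ^ 2 := by
    funext y
    rw [hg]
    ring
  have hg2int : Integrable (fun y => g y ^ 2) P0 := by
    rw [hg2eq]
    exact ((hTTint.sub (hTint.const_mul _)).add (integrable_const _))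
  have hintg2 : ∫ y, g y ^ 2 ∂P0
      = (∑ η : Fin m → Bool, ∑ η' : Fin m → Bool, Real.exp (∑ i, θ η i * θ η' i)) - N ^ 2 := by
    rw [hg2eq]
    have hsub : Integrable (fun y => T y * T y - (2 * N) * T y) P0 := by
      have := hTTint.sub (hTint.const_mul (2 * N))
      exact this
    rw [integral_add hsub (integrable_const _),
      integral_sub hTTint (hTint.const_mul _), MeasureTheory.integral_const_mul, hintT,
      integral_const, probReal_univ, one_smul, hintTT]
    ring
  -- bound the double sum
  have hdouble : ∑ η : Fin m → Bool, ∑ η' : Fin m → Bool, Real.exp (∑ i, θ η i * θ η' i)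
      = (4 * Real.cosh (ρ ^ 2)) ^ m := by
    have : ∀ η η' : Fin m → Bool, Real.exp (∑ i, θ η i * θ η' i)
        = ∏ j, Real.exp (ρ ^ 2 * (sgn (η j) * sgn (η' j))) := by
      intro η η'
      rw [hip η η', ← Real.exp_sum]
      congr 1
      exact Finset.sum_congr rfl fun j _ => by ring
    simp_rw [this]
    rw [sum_sum_prod_eq (fun p q => Real.exp (ρ ^ 2 * (sgn p * sgn q)))]
    congr 1
    rw [Real.cosh_eq]
    simp only [Fintype.sum_bool, hsgn]
    norm_num
    ring
  have hcosh : (4 * Real.cosh (ρ ^ 2)) ^ m ≤ N ^ 2 * (1 + 4 * δ' ^ 2) := by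
    have h4 : (4 * Real.cosh (ρ ^ 2)) ^ m = 4 ^ m * Real.cosh (ρ ^ 2) ^ m := by
      rw [mul_pow]
    have hN2 : N ^ 2 = 4 ^ m := by
      rw [hN, ← pow_mul, pow_mul']
      norm_num
    rw [h4, hN2]
    have h4m : (0:ℝ) ≤ 4 ^ m := by positivity
    exact mul_le_mul_of_nonneg_left hρ h4m
  have hintg2le : ∫ y, g y ^ 2 ∂P0 ≤ N ^ 2 * (4 * δ' ^ 2) := by
    rw [hintg2, hdouble]
    nlinarith [hcosh]
  -- L1 bound
  have habs_nonneg : 0 ≤ ∫ y, |g y| ∂P0 := integral_nonneg fun y => abs_nonneg _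
  have habs_le : ∫ y, |g y| ∂P0 ≤ N * (2 * δ') := by
    have hsq := sq_integral_abs_le P0 hgint hg2int
    have : (∫ y, |g y| ∂P0) ^ 2 ≤ (N * (2 * δ')) ^ 2 := by
      calc (∫ y, |g y| ∂P0) ^ 2 ≤ ∫ y, g y ^ 2 ∂P0 := hsq
        _ ≤ N ^ 2 * (4 * δ' ^ 2) := hintg2le
        _ = (N * (2 * δ')) ^ 2 := by ring
    have hnn : (0:ℝ) ≤ N * (2 * δ') := by positivity
    nlinarith [this, habs_nonneg, hnn]
  -- set bound
  have hhalf := abs_setIntegral_le_half P0 hgint hg0 hS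
  have hsetT : ∫ y in S, T y ∂P0
      = ∑ η : Fin m → Bool, (gaussP n (θ η) 1 S).toReal := by
    rw [hT, integral_finset_sum _ fun η _ => (integrable_LR (θ η)).restrict]
    exact Finset.sum_congr rfl fun η _ => (gaussP_apply_toReal (θ η) S hS).symm
  have hsetg : ∫ y in S, g y ∂P0
      = (∑ η : Fin m → Bool, (gaussP n (θ η) 1 S).toReal) - N * (P0 S).toReal := by
    rw [hg]
    rw [integral_sub hTint.restrict (integrable_const N), hsetT, setIntegral_const,
      smul_eq_mul, measureReal_def]
    ring
  have hsum_le : ∑ η : Fin m → Bool, (gaussP n (θ η) 1 S).toReal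
      ≤ N * ((P0 S).toReal + δ') := by
    have h5 : |(∑ η : Fin m → Bool, (gaussP n (θ η) 1 S).toReal) - N * (P0 S).toReal|
        ≤ N * δ' := by
      rw [← hsetg]
      calc |∫ y in S, g y ∂P0| ≤ (∫ y, |g y| ∂P0) / 2 := hhalf
        _ ≤ (N * (2 * δ')) / 2 := by linarith [habs_le]
        _ = N * δ' := by ring
    have := abs_le.mp h5
    nlinarith [this.2]
  -- extract one η
  have hex : ∃ η ∈ (Finset.univ : Finset (Fin m → Bool)),
      (gaussP n (θ η) 1 S).toReal ≤ (P0 S).toReal + δ' := by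
    apply Finset.exists_le_of_sum_le (Finset.univ_nonempty)
    rw [Finset.sum_const, Finset.card_univ, nsmul_eq_mul, hcard]
    exact hsum_le
  obtain ⟨η, -, hη⟩ := hex
  exact ⟨η, hη⟩


lemma exists_orthonormal_perp (F : Submodule ℝ (Fin n → ℝ)) (d : ℕ)
    (hdim : Module.finrank ℝ F = d) (hd : d < n) :
    ∃ w : Fin (n - d) → Fin n → ℝ,
      (∀ j k, (∑ i, w j i * w k i) = if j = k then (1:ℝ) else 0) ∧
      (∀ j, ∀ g ∈ F, (∑ i, w j i * g i) = 0) := by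
  classical
  set e := (WithLp.linearEquiv 2 ℝ (Fin n → ℝ)) with he
  set F' : Submodule ℝ (EuclideanSpace ℝ (Fin n)) := F.map (e.symm : (Fin n → ℝ) →ₗ[ℝ] EuclideanSpace ℝ (Fin n)) with hF'def
  have hF' : Module.finrank ℝ F' = d := by
    rw [hF'def]
    exact (LinearEquiv.finrank_map_eq e.symm F).trans hdim
  have hsum := Submodule.finrank_add_finrank_orthogonal (K := F')
  rw [hF', finrank_euclideanSpace_fin] at hsum
  have hK : Module.finrank ℝ (F'ᗮ : Submodule ℝ (EuclideanSpace ℝ (Fin n))) = n - d := by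
    omega
  set b := (stdOrthonormalBasis ℝ (F'ᗮ : Submodule ℝ (EuclideanSpace ℝ (Fin n)))).reindex
    (finCongr hK) with hb
  have happ : ∀ (x : EuclideanSpace ℝ (Fin n)) (i : Fin n), e x i = x i := fun x i => rfl
  have hinner : ∀ x y : EuclideanSpace ℝ (Fin n),
      (inner ℝ x y : ℝ) = ∑ i, e x i * e y i := by
    intro x y
    rw [PiLp.inner_apply]
    apply Finset.sum_congr rfl
    intro i _
    rw [happ, happ]
    simp [RCLike.inner_apply, conj_trivial, mul_comm]
  refine ⟨fun j => e ((b j : EuclideanSpace ℝ (Fin n))), ?_, ?_⟩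
  · intro j k
    rw [← hinner]
    have h1 := orthonormal_iff_ite.mp b.orthonormal j k
    rw [Submodule.coe_inner] at h1
    exact h1
  · intro j g hg
    have hgF' : e.symm g ∈ F' := Submodule.mem_map_of_mem hg
    have hmem : (b j : EuclideanSpace ℝ (Fin n)) ∈ F'ᗮ := (b j).2
    have h0 : (inner ℝ (e.symm g) ((b j : EuclideanSpace ℝ (Fin n))) : ℝ) = 0 :=
      (Submodule.mem_orthogonal F' _).mp hmem _ hgF'
    have h1 : (inner ℝ ((b j : EuclideanSpace ℝ (Fin n))) (e.symm g) : ℝ) = 0 := by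
      rw [real_inner_comm]
      exact h0
    rw [hinner] at h1
    rw [e.apply_symm_apply] at h1
    exact h1

end TLB

set_option maxHeartbeats 2000000 in
/-- any level-`ξ` test of `H₀ : f ∈ F` has type II error at least
`1 − ξ − δ` somewhere on the set `A` of alternatives at normalized distance `> ε`
from `F`, where `ε = (n−d)^{1/4}·n^{−1/2}·(2·log(1+4δ²))^{1/4}` (here `σ = 1`). -/
theorem testing_lower_bound (n d : ℕ) (hd : d < n)
    (F : Submodule ℝ (Fin n → ℝ)) (hdim : Module.finrank ℝ F = d)
    (P : (Fin n → ℝ) →ₗ[ℝ] (Fin n → ℝ)) (hP : IsOrthProjOn n F P)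
    (ξ δ : ℝ) (hξ : 0 < ξ) (hδ : 0 < δ) (hδξ : δ < 1 - ξ)
    (ε : ℝ)
    (hε : ε = ((n : ℝ) - d) ^ ((1 : ℝ) / 4) * (n : ℝ) ^ (-(1 : ℝ) / 2) *
      (2 * Real.log (1 + 4 * δ ^ 2)) ^ ((1 : ℝ) / 4))
    (φ : (Fin n → ℝ) → Bool) (hφ : Measurable φ)
    (hlevel : ∀ f ∈ F, (gaussP n f 1 {y | φ y = true}).toReal ≤ ξ) :
    1 - ξ - δ ≤ sSup {r : ℝ | ∃ f : Fin n → ℝ,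
      ε < norm2 n (f - P f) ∧ r = (gaussP n f 1 {y | φ y = false}).toReal} := by
  classical
  have hn : 0 < n := lt_of_le_of_lt (Nat.zero_le d) hd
  have hm0 : 0 < n - d := Nat.sub_pos_of_lt hd
  have hmcast : ((n - d : ℕ) : ℝ) = (n : ℝ) - d := by
    push_cast [Nat.cast_sub hd.le]
    ring
  have hmR : (0:ℝ) < ((n - d : ℕ) : ℝ) := Nat.cast_pos.mpr hm0
  have hnR : (0:ℝ) < (n:ℝ) := Nat.cast_pos.mpr hn
  obtain ⟨w, hw, hworth⟩ := TLB.exists_orthonormal_perp F d hdim hd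
  set Tset := {r : ℝ | ∃ f : Fin n → ℝ,
      ε < norm2 n (f - P f) ∧ r = (gaussP n f 1 {y | φ y = false}).toReal} with hTset
  have hbdd : BddAbove Tset := by
    refine ⟨1, ?_⟩
    rintro r ⟨f, -, rfl⟩
    haveI := TLB.gaussP_prob (n := n) f
    have h1 := prob_le_one (μ := gaussP n f 1) (s := {y | φ y = false})
    have h2 := ENNReal.toReal_mono ENNReal.one_ne_top h1
    simpa using h2
  apply le_of_forall_lt
  intro c hc
  obtain ⟨δ', hδδ', hδ'pos, hcδ'⟩ : ∃ δ' : ℝ, δ < δ' ∧ 0 < δ' ∧ c < 1 - ξ - δ' :=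
    ⟨δ + (1 - ξ - δ - c)/2, by linarith, by linarith, by linarith⟩
  obtain ⟨L', hL', hL'pos⟩ : ∃ L' : ℝ, L' = Real.log (1 + 4 * δ' ^ 2) ∧ 0 < L' :=
    ⟨_, rfl, Real.log_pos (by nlinarith)⟩
  have hXpos : (0:ℝ) < 2 * L' / (n - d : ℕ) := by positivity
  obtain ⟨ρ, hρpos, hρ4⟩ : ∃ ρ : ℝ, 0 < ρ ∧ ρ ^ (4:ℕ) = 2 * L' / (n - d : ℕ) := by
    refine ⟨(2 * L' / (n - d : ℕ)) ^ ((1:ℝ)/4), Real.rpow_pos_of_pos hXpos _, ?_⟩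
    rw [← Real.rpow_natCast ((2 * L' / (n - d : ℕ)) ^ ((1:ℝ)/4)) 4,
      ← Real.rpow_mul hXpos.le]
    norm_num
  have hcosh : Real.cosh (ρ ^ 2) ^ (n - d) ≤ 1 + 4 * δ' ^ 2 := by
    have h1 : Real.cosh (ρ ^ 2) ≤ Real.exp ((ρ ^ 2) ^ 2 / 2) := Real.cosh_le_exp_half_sq _
    have h2 : Real.cosh (ρ ^ 2) ^ (n - d) ≤ Real.exp ((ρ ^ 2) ^ 2 / 2) ^ (n - d) :=
      pow_le_pow_left₀ (Real.cosh_pos _).le h1 _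
    have h3 : Real.exp ((ρ ^ 2) ^ 2 / 2) ^ (n - d)
        = Real.exp (((n - d : ℕ) : ℝ) * ((ρ ^ 2) ^ 2 / 2)) := by
      rw [← Real.exp_nat_mul]
    have h4 : ((n - d : ℕ) : ℝ) * ((ρ ^ 2) ^ 2 / 2) = L' := by
      have : (ρ ^ 2) ^ 2 = ρ ^ (4:ℕ) := by ring
      rw [this, hρ4]
      field_simp
    rw [h3, h4, hL', Real.exp_log (by nlinarith)] at h2
    exact h2
  set S := {y | φ y = true} with hSdef
  have hS : MeasurableSet S := hφ (measurableSet_singleton true)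
  obtain ⟨η, hη⟩ := TLB.mixture (n - d) w hw ρ S hS δ' hδ'pos hcosh
  set f₀ : Fin n → ℝ := fun i => ∑ j, (ρ * (if η j then (1:ℝ) else -1)) * w j i with hf₀
  set c' : Fin (n - d) → ℝ := fun j => ρ * (if η j then (1:ℝ) else -1) with hc'
  have hff : ∑ i, f₀ i * f₀ i = ρ ^ 2 * (n - d : ℕ) := by
    have h1 := TLB.inner_comb w hw c' c'
    have h2 : ∀ j, c' j * c' j = ρ ^ 2 := by
      intro j
      rw [hc']
      cases hb : η j <;> simp [hb] <;> ring
    calc ∑ i, f₀ i * f₀ i = ∑ j, c' j * c' j := h1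
      _ = ∑ _j : Fin (n - d), ρ ^ 2 := Finset.sum_congr rfl fun j _ => h2 j
      _ = ρ ^ 2 * (n - d : ℕ) := by
          rw [Finset.sum_const, Finset.card_univ, Fintype.card_fin, nsmul_eq_mul]
          ring
  have hf0F : ∀ g ∈ F, ∑ i, f₀ i * g i = 0 := by
    intro g hg
    have h1 : ∑ i, f₀ i * g i = ∑ j, c' j * ∑ i, w j i * g i := by
      calc ∑ i, f₀ i * g i = ∑ i, ∑ j, c' j * (w j i * g i) := by
            apply Finset.sum_congr rfl
            intro i _
            rw [hf₀, Finset.sum_mul]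
            exact Finset.sum_congr rfl fun j _ => by ring
        _ = ∑ j, ∑ i, c' j * (w j i * g i) := Finset.sum_comm
        _ = ∑ j, c' j * ∑ i, w j i * g i := by
            exact Finset.sum_congr rfl fun j _ => by rw [Finset.mul_sum]
    rw [h1]
    apply Finset.sum_eq_zero
    intro j _
    rw [hworth j g hg, mul_zero]
  have hPf0 : P f₀ = 0 := by
    have hq := hP.1 f₀
    have hinner2 := hP.2 f₀ (P f₀) hq
    rw [inner2] at hinner2
    have hne : (n:ℝ) ≠ 0 := hnR.ne'
    have hz : ∑ i, (f₀ - P f₀) i * (P f₀) i = 0 :=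
      (div_eq_zero_iff.mp hinner2).resolve_right hne
    have hfq : ∑ i, f₀ i * (P f₀) i = 0 := hf0F (P f₀) hq
    have hexp : ∑ i, (f₀ - P f₀) i * (P f₀) i
        = ∑ i, f₀ i * (P f₀) i - ∑ i, (P f₀) i * (P f₀) i := by
      rw [← Finset.sum_sub_distrib]
      apply Finset.sum_congr rfl
      intro i _
      rw [Pi.sub_apply]
      ring
    have hqq : ∑ i, (P f₀) i * (P f₀) i = 0 := by
      rw [hexp, hfq] at hz
      linarith
    funext i
    have h := (Finset.sum_eq_zero_iff_of_nonneg
      (fun i _ => mul_self_nonneg ((P f₀) i))).mp hqq i (Finset.mem_univ i)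
    exact mul_self_eq_zero.mp h
  have hnorm : norm2 n (f₀ - P f₀) = Real.sqrt (ρ ^ 2 * (n - d : ℕ) / n) := by
    rw [hPf0, sub_zero, norm2]
    have hsq : ∑ i, f₀ i ^ 2 = ∑ i, f₀ i * f₀ i :=
      Finset.sum_congr rfl fun i _ => by ring
    rw [hsq, hff]
  have hεnorm : ε < norm2 n (f₀ - P f₀) := by
    rw [hnorm]
    have hεnn : 0 ≤ ε := by
      rw [hε]
      have hnd : (0:ℝ) ≤ (n:ℝ) - d := by rw [← hmcast]; exact hmR.le
      have hlg : (0:ℝ) ≤ 2 * Real.log (1 + 4 * δ ^ 2) := by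
        have := Real.log_nonneg (by nlinarith : (1:ℝ) ≤ 1 + 4 * δ ^ 2)
        linarith
      exact mul_nonneg (mul_nonneg (Real.rpow_nonneg hnd _)
        (Real.rpow_nonneg (Nat.cast_nonneg n) _)) (Real.rpow_nonneg hlg _)
    apply lt_of_pow_lt_pow_left₀ 4 (Real.sqrt_nonneg _)
    have hXnn : (0:ℝ) ≤ ρ ^ 2 * (n - d : ℕ) / n := by positivity
    have hs4 : Real.sqrt (ρ ^ 2 * (n - d : ℕ) / n) ^ (4:ℕ)
        = (ρ ^ 2 * (n - d : ℕ) / n) ^ 2 := by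
      rw [show (4:ℕ) = 2 * 2 from rfl, pow_mul, Real.sq_sqrt hXnn]
    have hL : (0:ℝ) < Real.log (1 + 4 * δ ^ 2) := Real.log_pos (by nlinarith)
    have e1 : (((n:ℝ) - d) ^ ((1:ℝ)/4)) ^ (4:ℕ) = (n:ℝ) - d := by
      rw [← Real.rpow_natCast (((n:ℝ) - d) ^ ((1:ℝ)/4)) 4,
        ← Real.rpow_mul (by rw [← hmcast]; exact hmR.le)]
      norm_num
    have e2 : (((n:ℝ)) ^ (-(1:ℝ)/2)) ^ (4:ℕ) = ((n:ℝ) ^ 2)⁻¹ := by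
      rw [← Real.rpow_natCast (((n:ℝ)) ^ (-(1:ℝ)/2)) 4, ← Real.rpow_mul hnR.le]
      rw [show (-(1:ℝ)/2 * (4:ℕ) : ℝ) = -2 by norm_num]
      rw [Real.rpow_neg hnR.le]
      norm_num
    have e3 : ((2 * Real.log (1 + 4 * δ ^ 2)) ^ ((1:ℝ)/4)) ^ (4:ℕ)
        = 2 * Real.log (1 + 4 * δ ^ 2) := by
      rw [← Real.rpow_natCast ((2 * Real.log (1 + 4 * δ ^ 2)) ^ ((1:ℝ)/4)) 4,
        ← Real.rpow_mul (by positivity)]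
      norm_num
    have hε4 : ε ^ (4:ℕ) = ((n:ℝ) - d) * ((n:ℝ) ^ 2)⁻¹ * (2 * Real.log (1 + 4 * δ ^ 2)) := by
      rw [hε, mul_pow, mul_pow, e1, e2, e3]
    rw [hε4, hs4]
    have hrhs : (ρ ^ 2 * (n - d : ℕ) / n) ^ 2
        = (2 * L') * ((n - d : ℕ) : ℝ) * ((n:ℝ) ^ 2)⁻¹ := by
      have : (ρ ^ 2 * ((n - d : ℕ) : ℝ) / n) ^ 2
          = ρ ^ (4:ℕ) * ((n - d : ℕ) : ℝ) ^ 2 * ((n:ℝ) ^ 2)⁻¹ := by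
        field_simp
      rw [this, hρ4]
      field_simp
    rw [hrhs, ← hmcast]
    have hLL : Real.log (1 + 4 * δ ^ 2) < L' := by
      rw [hL']
      apply Real.log_lt_log (by nlinarith)
      nlinarith
    have hinv : (0:ℝ) < ((n:ℝ) ^ 2)⁻¹ := by positivity
    nlinarith [mul_pos hmR hinv]
  haveI := TLB.gaussP_prob (n := n) f₀
  have hP0ξ := hlevel 0 F.zero_mem
  have hcompl : {y | φ y = false} = Sᶜ := by
    ext y
    simp [hSdef]
  have hval : (gaussP n f₀ 1 {y | φ y = false}).toReal
      = 1 - (gaussP n f₀ 1 S).toReal := by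
    rw [hcompl, prob_compl_eq_one_sub hS,
      ENNReal.toReal_sub_of_le prob_le_one ENNReal.one_ne_top, ENNReal.toReal_one]
  have hrge : 1 - ξ - δ' ≤ (gaussP n f₀ 1 {y | φ y = false}).toReal := by
    rw [hval]
    linarith [hη, hP0ξ]
  have hmem : (gaussP n f₀ 1 {y | φ y = false}).toReal ∈ Tset := ⟨f₀, hεnorm, rfl⟩
  calc c < 1 - ξ - δ' := hcδ'
    _ ≤ (gaussP n f₀ 1 {y | φ y = false}).toReal := hrge
    _ ≤ sSup Tset := le_csSup hbdd hmem


end
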